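/- Let m ≥ 2 be a natural number and let f : ZMod m × ZMod m → ℤ be a symmetric normalized 2-cocycle with values in ℤ, and let S_m = Σ_{k=0}^{m−1} f(1, k) ∈ ℤ. Then the twisted product group ℤ ×^f ZMod m is isomorphic to the presented group ⟨g, h ∣ g·h·g^(−1)·h^(−1), h^m·g^(−S_m)⟩. -/

import Mathlib

/-- The twisted product `ℤ ×^f ZMod m` is isomorphic to the presented group
`⟨g, h ∣ gh = hg, hᵐ = g^{S_m}⟩`, where `S_m = ∑_{k=0}^{m-1} f(1, k) ∈ ℤ`. -/
theorem twisted_product_with_int_iso_presented_group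
    (m : ℕ) (hm : 2 ≤ m)
    (f : ZMod m × ZMod m → ℤ)
    (hsym : ∀ g₁ g₂ : ZMod m, f (g₁, g₂) = f (g₂, g₁))
    (hnorm : f (0, 0) = 0)
    (hcoc : ∀ g₁ g₂ g₃ : ZMod m,
      f (g₁, g₂) + f (g₁ + g₂, g₃) = f (g₂, g₃) + f (g₁, g₂ + g₃))
    (G : Type*) [Group G] (e : G ≃ ℤ × ZMod m)
    (hone : e 1 = (0, 0))
    (hmul : ∀ x y : G,
      e (x * y) = ((e x).1 + (e y).1 + f ((e x).2, (e y).2), (e x).2 + (e y).2)) :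
    Nonempty (G ≃* PresentedGroup
      ({FreeGroup.of 0 * FreeGroup.of 1 * (FreeGroup.of 0)⁻¹ * (FreeGroup.of 1)⁻¹,
        FreeGroup.of 1 ^ m *
          FreeGroup.of 0 ^ (-(∑ k ∈ Finset.range m, f (1, (k : ZMod m))))} :
        Set (FreeGroup (Fin 2)))) := by
  haveI : NeZero m := ⟨by omega⟩
  have hf0 : ∀ z : ZMod m, f (0, z) = 0 := by
    intro z
    have h := hcoc 0 0 z
    simp only [add_zero, zero_add, hnorm] at h
    omega
  have hf0' : ∀ z : ZMod m, f (z, 0) = 0 := fun z => (hsym z 0).trans (hf0 z)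
  set S : ℤ := ∑ k ∈ Finset.range m, f (1, (k : ZMod m)) with hS
  set a : G := e.symm (1, 0) with hadef
  set b : G := e.symm (0, 1) with hbdef
  have hea : e a = (1, 0) := e.apply_symm_apply _
  have heb : e b = (0, 1) := e.apply_symm_apply _
  -- powers of a
  have hapow : ∀ n : ℤ, e (a ^ n) = (n, 0) := by
    intro n
    induction n using Int.induction_on with
    | zero => simpa using hone
    | succ n ih =>
      have : a ^ ((n : ℤ) + 1) = a ^ (n : ℤ) * a := by rw [zpow_add_one]
      rw [this, hmul, ih, hea]
      simp only [add_zero]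
      rw [show ((0 : ZMod m), (0 : ZMod m)) = (0 : ZMod m × ZMod m) from rfl] at hnorm
      simp [hnorm]; exact hnorm
    | pred n ih =>
      have hstep : a ^ (-(n : ℤ) - 1) * a = a ^ (-(n : ℤ)) := by
        rw [← zpow_add_one]; ring_nf
      have h2 := hmul (a ^ (-(n : ℤ) - 1)) a
      rw [hstep, ih, hea] at h2
      have h2' : ((e (a ^ (-(n : ℤ) - 1))).1 + 1 + f ((e (a ^ (-(n : ℤ) - 1))).2, 0),
          (e (a ^ (-(n : ℤ) - 1))).2) = ((-(n:ℤ)), (0 : ZMod m)) := by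
        simpa using h2.symm
      have hsnd : (e (a ^ (-(n : ℤ) - 1))).2 = 0 := congrArg Prod.snd h2'
      have hfst := congrArg Prod.fst h2'
      simp only [hsnd, hf0'] at hfst
      refine Prod.ext_iff.mpr ⟨by simpa using by omega, hsnd⟩
  set c : ℕ → ℤ := fun j => ∑ k ∈ Finset.range j, f ((k : ZMod m), 1) with hcdef
  have hbpow : ∀ j : ℕ, e (b ^ j) = (c j, (j : ZMod m)) := by
    intro j
    induction j with
    | zero => simpa [hcdef] using hone
    | succ j ih =>
      rw [pow_succ, hmul, ih, heb]
      refine Prod.ext_iff.mpr ⟨?_, by push_cast; ring⟩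
      simp [hcdef, Finset.sum_range_succ]
  have hcS : c m = S := by
    rw [hcdef, hS]
    exact Finset.sum_congr rfl fun k _ => hsym _ _
  have hab : a * b = b * a := by
    apply e.injective
    rw [hmul, hmul, hea, heb]
    simp [hsym 0 1, add_comm]
  have hbma : b ^ m = a ^ S := by
    apply e.injective
    rw [hbpow m, hapow S, hcS]
    simp
  have heab : ∀ (i : ℤ) (j : ℕ), e (a ^ i * b ^ j) = (i + c j, (j : ZMod m)) := by
    intro i j
    rw [hmul, hapow, hbpow]
    simp [hf0]
  have hkey : ∀ k1 k2 : ZMod m, f (k1, k2) + c k1.val + c k2.val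
      = c (k1 + k2).val + S * (((k1.val + k2.val) / m : ℕ) : ℤ) := by
    intro k1 k2
    set t : ℕ := (k1.val + k2.val) / m with ht
    have hsplit : k1.val + k2.val = m * t + (k1 + k2).val := by
      rw [ZMod.val_add, ht]
      exact (Nat.div_add_mod _ m).symm
    have hw1 : e (b ^ (k1.val + k2.val)) = (c k1.val + c k2.val + f (k1, k2), k1 + k2) := by
      rw [pow_add, hmul, hbpow, hbpow]
      have e1 : ((k1.val : ℕ) : ZMod m) = k1 := by
        rw [ZMod.natCast_val, ZMod.cast_id]
      have e2 : ((k2.val : ℕ) : ZMod m) = k2 := by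
        rw [ZMod.natCast_val, ZMod.cast_id]
      rw [e1, e2]
    have hw2 : e (b ^ (k1.val + k2.val)) = (S * (t : ℤ) + c (k1 + k2).val, k1 + k2) := by
      rw [hsplit, pow_add, pow_mul, hbma, ← zpow_natCast (a ^ S) t, ← zpow_mul, heab]
      have e3 : (((k1 + k2).val : ℕ) : ZMod m) = k1 + k2 := by
        rw [ZMod.natCast_val, ZMod.cast_id]
      rw [e3]
    have := congrArg Prod.fst (hw1.symm.trans hw2)
    simp only at this
    omega
  set rels : Set (FreeGroup (Fin 2)) :=
    {FreeGroup.of 0 * FreeGroup.of 1 * (FreeGroup.of 0)⁻¹ * (FreeGroup.of 1)⁻¹,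
      FreeGroup.of 1 ^ m * FreeGroup.of 0 ^ (-S)} with hrels
  set x : PresentedGroup rels := PresentedGroup.of 0 with hx
  set y : PresentedGroup rels := PresentedGroup.of 1 with hy
  -- the relations hold in the presented group
  have hπ : ∀ r ∈ rels, (QuotientGroup.mk r : PresentedGroup rels) = 1 := by
    intro r hr
    rw [QuotientGroup.eq_one_iff]
    exact Subgroup.subset_normalClosure hr
  have hrel1 : x * y = y * x := by
    have h1 := hπ _ (Set.mem_insert _ _)
    have : x * y * x⁻¹ * y⁻¹ = 1 := by
      exact h1
    calc x * y = (x * y * x⁻¹ * y⁻¹) * (y * x) := by group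
    _ = y * x := by rw [this]; group
  have hrel2 : y ^ m = x ^ S := by
    have h2 := hπ _ (Set.mem_insert_of_mem _ rfl)
    have : y ^ m * x ^ (-S) = 1 := by
      exact h2
    calc y ^ m = (y ^ m * x ^ (-S)) * x ^ S := by group
    _ = x ^ S := by rw [this]; group
  have hcomm : ∀ (i : ℤ) (j : ℕ), y ^ j * x ^ i = x ^ i * y ^ j := by
    intro i j
    have hc : Commute x y := hrel1
    exact ((hc.symm.pow_left j).zpow_right i).eq
  -- normal form multiplication in the presented group
  have hnf : ∀ (i1 i2 : ℤ) (j1 j2 : ℕ),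
      (x ^ i1 * y ^ j1) * (x ^ i2 * y ^ j2) = x ^ (i1 + i2) * y ^ (j1 + j2) := by
    intro i1 i2 j1 j2
    rw [mul_assoc, ← mul_assoc (y ^ j1), hcomm i2 j1, mul_assoc, ← mul_assoc,
      ← zpow_add, ← pow_add]
  have hyred : ∀ j : ℕ, y ^ j = x ^ (S * ((j / m : ℕ) : ℤ)) * y ^ (j % m) := by
    intro j
    conv_lhs => rw [← Nat.div_add_mod j m]
    rw [pow_add, pow_mul, hrel2, ← zpow_natCast (x ^ S) (j / m), ← zpow_mul]
  haveI : Fact (1 < m) := ⟨by omega⟩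
  -- the homomorphism G →* PresentedGroup rels
  set w : G → PresentedGroup rels :=
    fun g => x ^ ((e g).1 - c (e g).2.val) * y ^ ((e g).2.val) with hw
  have hwmul : ∀ g h : G, w (g * h) = w g * w h := by
    intro g h
    simp only [hw, hmul g h]
    rw [hnf]
    rw [hyred ((e g).2.val + (e h).2.val)]
    rw [← mul_assoc, ← zpow_add]
    have hmod : ((e g).2.val + (e h).2.val) % m = ((e g).2 + (e h).2).val :=
      (ZMod.val_add _ _).symm
    rw [hmod]
    congr 2
    have hk := hkey (e g).2 (e h).2
    linarith
  set ψm : G →* PresentedGroup rels := MonoidHom.mk' w hwmul with hψm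
  -- the homomorphism PresentedGroup rels →* G
  set F : Fin 2 → G := ![a, b] with hF
  have hFrel : ∀ r ∈ rels, FreeGroup.lift F r = 1 := by
    intro r hr
    rcases hr with rfl | hr
    · simp only [map_mul, map_inv, FreeGroup.lift_apply_of, hF, Matrix.cons_val_zero,
        Matrix.cons_val_one, Matrix.head_cons]
      rw [hab]
      group
    · rw [Set.mem_singleton_iff] at hr
      subst hr
      simp only [map_mul, map_pow, map_zpow, FreeGroup.lift_apply_of, hF, Matrix.cons_val_zero,
        Matrix.cons_val_one, Matrix.head_cons]
      rw [hbma]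
      group
  set φm : PresentedGroup rels →* G := PresentedGroup.toGroup hFrel with hφm
  have hφx : φm x = a := PresentedGroup.toGroup.of hFrel
  have hφy : φm y = b := PresentedGroup.toGroup.of hFrel
  have hval0 : (0 : ZMod m).val = 0 := ZMod.val_zero
  have hc0 : c 0 = 0 := by simp [hcdef]
  have hc1 : c 1 = 0 := by simp [hcdef, hf0]
  have hψa : ψm a = x := by
    show w a = x
    rw [hw]
    simp only [hea, hval0, hc0]
    group
  have hψb : ψm b = y := by
    show w b = y
    rw [hw]
    simp only [heb, ZMod.val_one, hc1]
    group
  have h₁ : φm.comp ψm = MonoidHom.id G := by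
    ext g
    show φm (w g) = g
    rw [hw]
    simp only [map_mul, map_zpow, map_pow, hφx, hφy]
    apply e.injective
    rw [heab]
    refine Prod.ext_iff.mpr ⟨by ring, ?_⟩
    simp [ZMod.natCast_val, ZMod.cast_id]
  have h₂ : ψm.comp φm = MonoidHom.id (PresentedGroup rels) := by
    apply PresentedGroup.ext
    intro i
    fin_cases i
    · show ψm (φm x) = x
      rw [hφx, hψa]
    · show ψm (φm y) = y
      rw [hφy, hψb]
  exact ⟨MonoidHom.toMulEquiv ψm φm h₁ h₂⟩
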